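/- Let k ≥ 12 with k ≡ 0 (mod 4), let N = (k-4)/2, and let A be the N×N rational matrix with A_{ij} = C(2j,2i) - C(2j,k-2-2i) + δ(i+j=(k-2)/2). For 1 ≤ i,j ≤ N/2, one has A_{ij} + A_{i,(k-2)/2-j} + A_{(k-2)/2-i,j} + A_{(k-2)/2-i,(k-2)/2-j} = 2·δ(i=j). -/
import Mathlib


theorem upper_left_block_identity
    (k : ℕ) (hk : 12 ≤ k) (hk4 : k % 4 = 0)
    (A : ℕ → ℕ → ℚ)
    (hA : ∀ i j : ℕ, A i j = (Nat.choose (2 * j) (2 * i) : ℚ)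
        - (Nat.choose (2 * j) (k - 2 - 2 * i) : ℚ)
        + (if i + j = (k - 2) / 2 then 1 else 0)) :
    ∀ i j : ℕ, 1 ≤ i → i ≤ ((k - 4) / 2) / 2 → 1 ≤ j → j ≤ ((k - 4) / 2) / 2 →
      A i j + A i ((k - 2) / 2 - j) + A ((k - 2) / 2 - i) j
          + A ((k - 2) / 2 - i) ((k - 2) / 2 - j)
        = 2 * (if i = j then 1 else 0) := by
  intro i j hi1 hi2 hj1 hj2
  obtain ⟨t, rfl⟩ : ∃ t, k = 4 * t := ⟨k / 4, by omega⟩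
  have ht : 3 ≤ t := by omega
  have hi2' : i ≤ t - 1 := by omega
  have hj2' : j ≤ t - 1 := by omega
  have hm : (4 * t - 2) / 2 = 2 * t - 1 := by omega
  have e1 : 4 * t - 2 - 2 * i = 2 * (2 * t - 1 - i) := by omega
  have e2 : 4 * t - 2 - 2 * (2 * t - 1 - i) = 2 * i := by omega
  have c1 : ¬ (i + j = 2 * t - 1) := by omega
  have c2 : (i + (2 * t - 1 - j) = 2 * t - 1) ↔ i = j := by omega
  have c3 : (2 * t - 1 - i + j = 2 * t - 1) ↔ i = j := by omega
  have c4 : ¬ (2 * t - 1 - i + (2 * t - 1 - j) = 2 * t - 1) := by omega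
  simp only [hA, hm, e1, e2, if_neg c1, if_neg c4, c2, c3]
  by_cases h : i = j <;> simp [h] <;> ring
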